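/- Let W ∈ ℝ^{N×N} be doubly stochastic with λ := ‖W − 1_N1_Nᵀ/N‖ (spectral norm). Let V, Δ ∈ ℝ^{(Nm)×n} be stacked matrices with blocks in ℝ^{m×n}, and set V' := (W ⊗ I_m)(V + Δ). Let V̄ and V̄' denote the averages of the blocks of V and V', respectively. Then ‖V' − 1_N ⊗ V̄'‖_* ≤ λ(‖V − 1_N ⊗ V̄‖_* + ‖Δ‖_*). -/

import Mathlib

open Matrix Kronecker

/-- Spectral norm: ℓ²→ℓ² operator norm of a real matrix. -/
noncomputable def specNorm {ι κ : Type*} [Fintype ι] [Fintype κ] [DecidableEq κ]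
    (A : Matrix ι κ ℝ) : ℝ :=
  ‖LinearMap.toContinuousLinearMap (Matrix.toEuclideanLin A)‖

/-- Nuclear norm: trace of the positive semidefinite square root of `Aᵀ * A`. -/
noncomputable def nucNorm {ι κ : Type*} [Fintype ι] [Fintype κ] [DecidableEq κ]
    (A : Matrix ι κ ℝ) : ℝ :=
  Matrix.trace
    (((Matrix.posSemidef_conjTranspose_mul_self A).1.eigenvectorUnitary : Matrix κ κ ℝ) *
      diagonal (((↑) : ℝ → ℝ) ∘ (fun x => Real.sqrt x) ∘
        (Matrix.posSemidef_conjTranspose_mul_self A).1.eigenvalues) *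
      (star (Matrix.posSemidef_conjTranspose_mul_self A).1.eigenvectorUnitary : Matrix κ κ ℝ))

/-- Frobenius norm. -/
noncomputable def frobNorm {ι κ : Type*} [Fintype ι] [Fintype κ] (A : Matrix ι κ ℝ) : ℝ :=
  Real.sqrt (∑ i, ∑ j, (A i j) ^ 2)

/-- Trace inner product `⟨A, B⟩ = trace (Aᵀ B)`. -/
noncomputable def tin {ι κ : Type*} [Fintype ι] [Fintype κ] (A B : Matrix ι κ ℝ) : ℝ :=
  Matrix.trace (Aᵀ * B)

/-- Vertical stacking of `N` matrices of size `m × n`. -/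
def vstack {N m n : ℕ} (Y : Fin N → Matrix (Fin m) (Fin n) ℝ) :
    Matrix (Fin N × Fin m) (Fin n) ℝ :=
  fun p j => Y p.1 p.2 j

/-- The `i`-th `m × n` block of a stacked `(N·m) × n` matrix. -/
def blk {N m n : ℕ} (Z : Matrix (Fin N × Fin m) (Fin n) ℝ) (i : Fin N) :
    Matrix (Fin m) (Fin n) ℝ :=
  fun a j => Z (i, a) j

namespace S15

noncomputable def enorm {ι : Type*} [Fintype ι] (u : ι → ℝ) : ℝ := Real.sqrt (∑ i, (u i)^2)

variable {ι κ ι' : Type*} [Fintype ι] [Fintype κ] [Fintype ι'] [DecidableEq κ] [DecidableEq ι']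

lemma enorm_nonneg {ι : Type*} [Fintype ι] (u : ι → ℝ) : 0 ≤ enorm u := Real.sqrt_nonneg _

lemma sq_sum_nonneg {ι : Type*} [Fintype ι] (u : ι → ℝ) : 0 ≤ ∑ i, (u i)^2 :=
  Finset.sum_nonneg fun _ _ => sq_nonneg _

lemma enorm_sq {ι : Type*} [Fintype ι] (u : ι → ℝ) : enorm u ^ 2 = ∑ i, (u i)^2 :=
  Real.sq_sqrt (sq_sum_nonneg u)

lemma norm_euclidean {ι : Type*} [Fintype ι] (x : EuclideanSpace ℝ ι) :
    ‖x‖ = enorm ((WithLp.equiv 2 (ι → ℝ)) x) := by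
  rw [EuclideanSpace.norm_eq]
  unfold enorm
  congr 1
  refine Finset.sum_congr rfl fun i _ => ?_
  rw [Real.norm_eq_abs, sq_abs]
  rfl

lemma specNorm_nonneg (A : Matrix ι κ ℝ) : 0 ≤ specNorm A := norm_nonneg _

lemma enorm_mulVec_le (A : Matrix ι κ ℝ) (u : κ → ℝ) :
    enorm (A *ᵥ u) ≤ specNorm A * enorm u := by
  have h := (LinearMap.toContinuousLinearMap (Matrix.toEuclideanLin A)).le_opNorm
      ((WithLp.equiv 2 (κ → ℝ)).symm u)
  have e1 : (LinearMap.toContinuousLinearMap (Matrix.toEuclideanLin A))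
        ((WithLp.equiv 2 (κ → ℝ)).symm u)
      = (WithLp.equiv 2 (ι → ℝ)).symm (A *ᵥ u) := rfl
  rw [e1, norm_euclidean, norm_euclidean, Equiv.apply_symm_apply, Equiv.apply_symm_apply] at h
  exact h

lemma specNorm_le_of (A : Matrix ι κ ℝ) {c : ℝ} (hc : 0 ≤ c)
    (h : ∀ u, enorm (A *ᵥ u) ≤ c * enorm u) : specNorm A ≤ c := by
  apply ContinuousLinearMap.opNorm_le_bound _ hc
  intro x
  have h2 := h ((WithLp.equiv 2 (κ → ℝ)) x)
  have e1 : (LinearMap.toContinuousLinearMap (Matrix.toEuclideanLin A)) x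
      = (WithLp.equiv 2 (ι → ℝ)).symm (A *ᵥ ((WithLp.equiv 2 (κ → ℝ)) x)) := rfl
  rw [e1, norm_euclidean, norm_euclidean, Equiv.apply_symm_apply]
  exact h2

lemma dot_le (u w : ι → ℝ) : u ⬝ᵥ w ≤ enorm u * enorm w := by
  have h := real_inner_le_norm ((WithLp.equiv 2 (ι → ℝ)).symm u) ((WithLp.equiv 2 (ι → ℝ)).symm w)
  rw [norm_euclidean, norm_euclidean, Equiv.apply_symm_apply, Equiv.apply_symm_apply] at h
  refine le_trans (le_of_eq ?_) h
  simp [PiLp.inner_apply, RCLike.inner_apply, dotProduct, mul_comm]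

lemma sum_mul_sum_sum {α β : Type*} [Fintype α] [Fintype β] (f g : α → β → ℝ) :
    ∑ i : β, (∑ k, f k i) * (∑ l, g l i) = ∑ k, ∑ l, ∑ i : β, f k i * g l i :=
  calc ∑ i : β, (∑ k, f k i) * (∑ l, g l i)
      = ∑ i : β, ∑ k, ∑ l, f k i * g l i := by
        refine Finset.sum_congr rfl fun i _ => ?_
        rw [Finset.sum_mul_sum]
    _ = ∑ k, ∑ i : β, ∑ l, f k i * g l i := Finset.sum_comm
    _ = ∑ k, ∑ l, ∑ i : β, f k i * g l i :=
        Finset.sum_congr rfl fun k _ => Finset.sum_comm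

noncomputable def ev (B : Matrix ι κ ℝ) : κ → ℝ :=
  (Matrix.posSemidef_conjTranspose_mul_self B).1.eigenvalues

noncomputable def evec (B : Matrix ι κ ℝ) : κ → κ → ℝ :=
  fun k => (WithLp.equiv 2 (κ → ℝ))
    ((Matrix.posSemidef_conjTranspose_mul_self B).1.eigenvectorBasis k)

lemma ev_nonneg (B : Matrix ι κ ℝ) (k : κ) : 0 ≤ ev B k :=
  (Matrix.posSemidef_conjTranspose_mul_self B).eigenvalues_nonneg k

lemma heig (B : Matrix ι κ ℝ) (k : κ) : (Bᴴ * B) *ᵥ evec B k = ev B k • evec B k :=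
  (Matrix.posSemidef_conjTranspose_mul_self B).1.mulVec_eigenvectorBasis k

lemma hcompl (B : Matrix ι κ ℝ) (a b : κ) :
    ∑ k, evec B k a * evec B k b = if a = b then 1 else 0 := by
  set h := (Matrix.posSemidef_conjTranspose_mul_self B).1
  have h1 : (h.eigenvectorUnitary : Matrix κ κ ℝ) * star (h.eigenvectorUnitary : Matrix κ κ ℝ)
      = 1 := Unitary.mul_star_self_of_mem h.eigenvectorUnitary.2
  have h2 := congrFun (congrFun h1 a) b
  simpa [Matrix.mul_apply, Matrix.star_eq_conjTranspose, Matrix.conjTranspose_apply,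
    Matrix.one_apply, evec] using h2

lemma horth (B : Matrix ι κ ℝ) (k l : κ) :
    ∑ a, evec B k a * evec B l a = if k = l then 1 else 0 := by
  set h := (Matrix.posSemidef_conjTranspose_mul_self B).1
  have h1 : star (h.eigenvectorUnitary : Matrix κ κ ℝ) * (h.eigenvectorUnitary : Matrix κ κ ℝ)
      = 1 := Unitary.star_mul_self_of_mem h.eigenvectorUnitary.2
  have h2 := congrFun (congrFun h1 k) l
  simpa [Matrix.mul_apply, Matrix.star_eq_conjTranspose, Matrix.conjTranspose_apply,
    Matrix.one_apply, evec, mul_comm] using h2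

lemma nucNorm_eq (B : Matrix ι κ ℝ) : nucNorm B = ∑ k, Real.sqrt (ev B k) := by
  unfold nucNorm
  rw [Matrix.trace_mul_cycle]
  rw [show (star (Matrix.posSemidef_conjTranspose_mul_self B).1.eigenvectorUnitary
        : Matrix κ κ ℝ) * ((Matrix.posSemidef_conjTranspose_mul_self B).1.eigenvectorUnitary.1)
      = 1 from Unitary.star_mul_self_of_mem
        (Matrix.posSemidef_conjTranspose_mul_self B).1.eigenvectorUnitary.2]
  rw [Matrix.one_mul, Matrix.trace_diagonal]
  rfl

lemma nucNorm_nonneg (B : Matrix ι κ ℝ) : 0 ≤ nucNorm B := by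
  rw [nucNorm_eq]
  exact Finset.sum_nonneg fun _ _ => Real.sqrt_nonneg _

lemma dot_aux (B : Matrix ι κ ℝ) (u w : κ → ℝ) :
    (B *ᵥ u) ⬝ᵥ (B *ᵥ w) = u ⬝ᵥ ((Bᴴ * B) *ᵥ w) := by
  have hct : Bᴴ = Bᵀ := by ext i j; simp [Matrix.conjTranspose_apply]
  rw [hct]
  conv_rhs => rw [← Matrix.mulVec_mulVec, Matrix.dotProduct_mulVec, Matrix.vecMul_transpose]

lemma hGram (B : Matrix ι κ ℝ) (k l : κ) :
    ∑ i, (B *ᵥ evec B k) i * (B *ᵥ evec B l) i = if k = l then ev B k else 0 := by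
  have e1 : ∑ i, (B *ᵥ evec B k) i * (B *ᵥ evec B l) i
      = (B *ᵥ evec B k) ⬝ᵥ (B *ᵥ evec B l) := rfl
  rw [e1, dot_aux, heig]
  have e2 : evec B k ⬝ᵥ (ev B l • evec B l) = ev B l * ∑ a, evec B k a * evec B l a := by
    simp [dotProduct, Finset.mul_sum]
    exact Finset.sum_congr rfl fun a _ => by ring
  rw [e2, horth]
  by_cases hkl : k = l
  · subst hkl; simp
  · simp [hkl]

lemma trace_as_sum (X A : Matrix ι κ ℝ) : tin X A = ∑ j, ∑ i, X i j * A i j := by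
  unfold tin Matrix.trace
  simp [Matrix.diag, Matrix.mul_apply, Matrix.transpose_apply]

lemma sum_dot (B : Matrix ι κ ℝ) {ι₂ : Type*} [Fintype ι₂] (C D : Matrix ι₂ κ ℝ) :
    ∑ k, ∑ i, (C *ᵥ evec B k) i * (D *ᵥ evec B k) i = ∑ j, ∑ i, C i j * D i j := by
  have step : ∀ i : ι₂, ∑ k, (C *ᵥ evec B k) i * (D *ᵥ evec B k) i = ∑ a, C i a * D i a := by
    intro i
    calc ∑ k, (C *ᵥ evec B k) i * (D *ᵥ evec B k) i
        = ∑ k, (∑ a, C i a * evec B k a) * (∑ b, D i b * evec B k b) := rfl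
      _ = ∑ a, ∑ b, ∑ k, (C i a * evec B k a) * (D i b * evec B k b) :=
          sum_mul_sum_sum (fun a k => C i a * evec B k a) (fun b k => D i b * evec B k b)
      _ = ∑ a, ∑ b, (C i a * D i b) * ∑ k, evec B k a * evec B k b := by
          refine Finset.sum_congr rfl fun a _ => Finset.sum_congr rfl fun b _ => ?_
          rw [Finset.mul_sum]
          exact Finset.sum_congr rfl fun k _ => by ring
      _ = ∑ a, C i a * D i a := by
          refine Finset.sum_congr rfl fun a _ => ?_
          simp [hcompl B, mul_ite, mul_one, mul_zero]
  calc ∑ k, ∑ i, (C *ᵥ evec B k) i * (D *ᵥ evec B k) i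
      = ∑ i, ∑ k, (C *ᵥ evec B k) i * (D *ᵥ evec B k) i := Finset.sum_comm
    _ = ∑ i, ∑ a, C i a * D i a := Finset.sum_congr rfl fun i _ => step i
    _ = ∑ a, ∑ i, C i a * D i a := Finset.sum_comm

lemma enorm_v (B : Matrix ι κ ℝ) (k : κ) : enorm (evec B k) = 1 := by
  unfold enorm
  have : ∑ a, (evec B k a)^2 = 1 := by
    have h := horth B k k
    simp only [eq_self_iff_true, if_true] at h
    rw [← h]
    exact Finset.sum_congr rfl fun a _ => pow_two _
  rw [this, Real.sqrt_one]

lemma enorm_Bv (B : Matrix ι κ ℝ) (k : κ) :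
    enorm (B *ᵥ evec B k) = Real.sqrt (ev B k) := by
  unfold enorm
  congr 1
  have h := hGram B k k
  simp only [eq_self_iff_true, if_true] at h
  rw [← h]
  exact Finset.sum_congr rfl fun a _ => pow_two _

lemma tin_bound (X : Matrix ι κ ℝ) (M : Matrix ι ι' ℝ) (B : Matrix ι' κ ℝ) :
    tin X (M * B) ≤ specNorm X * (specNorm M * nucNorm B) := by
  rw [trace_as_sum, ← sum_dot B X (M * B), nucNorm_eq]
  rw [Finset.mul_sum, Finset.mul_sum]
  simp only [← mul_assoc]
  refine Finset.sum_le_sum fun k _ => ?_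
  calc ∑ i, (X *ᵥ evec B k) i * ((M * B) *ᵥ evec B k) i
      = (X *ᵥ evec B k) ⬝ᵥ (M *ᵥ (B *ᵥ evec B k)) := by
        rw [Matrix.mulVec_mulVec]; rfl
    _ ≤ enorm (X *ᵥ evec B k) * enorm (M *ᵥ (B *ᵥ evec B k)) := dot_le _ _
    _ ≤ (specNorm X * enorm (evec B k)) * (specNorm M * enorm (B *ᵥ evec B k)) := by
        refine mul_le_mul (enorm_mulVec_le _ _) (enorm_mulVec_le _ _) (enorm_nonneg _) ?_
        exact mul_nonneg (specNorm_nonneg _) (enorm_nonneg _)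
    _ = specNorm X * specNorm M * Real.sqrt (ev B k) := by
        rw [enorm_v, enorm_Bv]; ring

lemma mul_sum_ring {α : Type*} [Fintype α] (a b : ℝ) (f g : α → ℝ) :
    ∑ i, (a * f i) * (b * g i) = (a * b) * ∑ i, f i * g i := by
  rw [Finset.mul_sum]
  exact Finset.sum_congr rfl fun i _ => by ring

lemma attain (B : Matrix ι κ ℝ) :
    ∃ X : Matrix ι κ ℝ, specNorm X ≤ 1 ∧ tin X B = nucNorm B := by
  classical
  set μ : κ → ℝ := fun k => if ev B k = 0 then 0 else (Real.sqrt (ev B k))⁻¹ with hμ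
  have hμsq : ∀ k, μ k ^ 2 * ev B k ≤ 1 := by
    intro k
    by_cases h : ev B k = 0
    · simp [hμ, h]
    · have hpos : 0 < ev B k := lt_of_le_of_ne (ev_nonneg B k) (Ne.symm h)
      simp only [hμ, if_neg h]
      rw [inv_pow, Real.sq_sqrt (le_of_lt hpos), inv_mul_cancel₀ h]
  have hμev : ∀ k, μ k * ev B k = Real.sqrt (ev B k) := by
    intro k
    by_cases h : ev B k = 0
    · simp [hμ, h]
    · have hpos : 0 < ev B k := lt_of_le_of_ne (ev_nonneg B k) (Ne.symm h)
      have hs : Real.sqrt (ev B k) ≠ 0 := ne_of_gt (Real.sqrt_pos.mpr hpos)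
      simp only [hμ, if_neg h]
      rw [inv_mul_eq_div, div_eq_iff hs]
      exact (Real.mul_self_sqrt (ev_nonneg B k)).symm
  refine ⟨fun i j => ∑ k, μ k * (B *ᵥ evec B k) i * evec B k j, ?_, ?_⟩
  · refine specNorm_le_of _ zero_le_one ?_
    intro u
    rw [one_mul]
    set c : κ → ℝ := fun k => ∑ j, evec B k j * u j with hc
    have hXu : ∀ i, ((fun i j => ∑ k, μ k * (B *ᵥ evec B k) i * evec B k j) *ᵥ u) i
        = ∑ k, (μ k * c k) * (B *ᵥ evec B k) i := by
      intro i
      calc ∑ j, (∑ k, μ k * (B *ᵥ evec B k) i * evec B k j) * u j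
          = ∑ j, ∑ k, (μ k * (B *ᵥ evec B k) i) * (evec B k j * u j) := by
            refine Finset.sum_congr rfl fun j _ => ?_
            rw [Finset.sum_mul]
            exact Finset.sum_congr rfl fun k _ => by ring
        _ = ∑ k, ∑ j, (μ k * (B *ᵥ evec B k) i) * (evec B k j * u j) := Finset.sum_comm
        _ = ∑ k, (μ k * (B *ᵥ evec B k) i) * c k := by
            refine Finset.sum_congr rfl fun k _ => ?_
            rw [← Finset.mul_sum]
        _ = ∑ k, (μ k * c k) * (B *ᵥ evec B k) i :=
            Finset.sum_congr rfl fun k _ => by ring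
    unfold enorm
    apply Real.sqrt_le_sqrt
    have hsq : ∑ i, (((fun i j => ∑ k, μ k * (B *ᵥ evec B k) i * evec B k j) *ᵥ u) i)^2
        = ∑ k, (μ k * c k)^2 * ev B k := by
      calc ∑ i, (((fun i j => ∑ k, μ k * (B *ᵥ evec B k) i * evec B k j) *ᵥ u) i)^2
          = ∑ i, (∑ k, (μ k * c k) * (B *ᵥ evec B k) i)
              * (∑ l, (μ l * c l) * (B *ᵥ evec B l) i) := by
            refine Finset.sum_congr rfl fun i _ => ?_
            rw [hXu i, pow_two]
        _ = ∑ k, ∑ l, ∑ i, ((μ k * c k) * (B *ᵥ evec B k) i)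
              * ((μ l * c l) * (B *ᵥ evec B l) i) :=
            sum_mul_sum_sum _ _
        _ = ∑ k, ∑ l, ((μ k * c k) * (μ l * c l))
              * ∑ i, (B *ᵥ evec B k) i * (B *ᵥ evec B l) i := by
            exact Finset.sum_congr rfl fun k _ => Finset.sum_congr rfl fun l _ =>
              mul_sum_ring _ _ _ _
        _ = ∑ k, (μ k * c k)^2 * ev B k := by
            refine Finset.sum_congr rfl fun k _ => ?_
            simp only [hGram B, mul_ite, mul_zero, Finset.sum_ite_eq, Finset.mem_univ, if_true]
            ring
    rw [hsq]
    have hpar : ∑ k, c k ^ 2 = ∑ j, (u j)^2 := by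
      have hp := sum_dot B (fun (_ : Unit) j => u j) (fun (_ : Unit) j => u j)
      simp only [Matrix.mulVec, dotProduct, Finset.univ_unique, Finset.sum_singleton] at hp
      calc ∑ k, c k ^ 2 = ∑ k, (∑ j, u j * evec B k j) * (∑ j, u j * evec B k j) := by
            refine Finset.sum_congr rfl fun k _ => ?_
            rw [pow_two, hc]
            congr 1 <;> exact Finset.sum_congr rfl fun j _ => by ring
        _ = ∑ j, u j * u j := hp
        _ = ∑ j, (u j)^2 := Finset.sum_congr rfl fun j _ => (pow_two _).symm
    rw [← hpar]
    refine Finset.sum_le_sum fun k _ => ?_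
    have h1 := hμsq k
    have h2 := sq_nonneg (c k)
    have h3 := ev_nonneg B k
    nlinarith [sq_nonneg (μ k)]
  · refine (trace_as_sum _ _).trans ?_
    rw [nucNorm_eq]
    calc ∑ j, ∑ i, (∑ k, μ k * (B *ᵥ evec B k) i * evec B k j) * B i j
        = ∑ j, ∑ i, ∑ k, (μ k * (B *ᵥ evec B k) i) * (B i j * evec B k j) := by
          refine Finset.sum_congr rfl fun j _ => Finset.sum_congr rfl fun i _ => ?_
          rw [Finset.sum_mul]
          exact Finset.sum_congr rfl fun k _ => by ring
      _ = ∑ i, ∑ j, ∑ k, (μ k * (B *ᵥ evec B k) i) * (B i j * evec B k j) := Finset.sum_comm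
      _ = ∑ i, ∑ k, ∑ j, (μ k * (B *ᵥ evec B k) i) * (B i j * evec B k j) :=
          Finset.sum_congr rfl fun i _ => Finset.sum_comm
      _ = ∑ k, ∑ i, ∑ j, (μ k * (B *ᵥ evec B k) i) * (B i j * evec B k j) := Finset.sum_comm
      _ = ∑ k, ∑ i, (μ k * (B *ᵥ evec B k) i) * (B *ᵥ evec B k) i := by
          refine Finset.sum_congr rfl fun k _ => Finset.sum_congr rfl fun i _ => ?_
          rw [← Finset.mul_sum]
          rfl
      _ = ∑ k, μ k * ∑ i, (B *ᵥ evec B k) i * (B *ᵥ evec B k) i := by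
          refine Finset.sum_congr rfl fun k _ => ?_
          rw [Finset.mul_sum]
          exact Finset.sum_congr rfl fun i _ => by ring
      _ = ∑ k, Real.sqrt (ev B k) := by
          refine Finset.sum_congr rfl fun k _ => ?_
          rw [hGram B k k, if_pos rfl, hμev]

lemma specNorm_one_le {ι : Type*} [Fintype ι] [DecidableEq ι] :
    specNorm (1 : Matrix ι ι ℝ) ≤ 1 :=
  specNorm_le_of _ zero_le_one fun u => by rw [Matrix.one_mulVec, one_mul]

lemma tin_le [DecidableEq ι] (X C : Matrix ι κ ℝ) : tin X C ≤ specNorm X * nucNorm C := by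
  have h := tin_bound X (1 : Matrix ι ι ℝ) C
  rw [Matrix.one_mul] at h
  refine h.trans ?_
  have h1 := specNorm_one_le (ι := ι)
  nlinarith [mul_nonneg (mul_nonneg (specNorm_nonneg X) (nucNorm_nonneg C)) (sub_nonneg.mpr h1)]

lemma tin_add (X C D : Matrix ι κ ℝ) : tin X (C + D) = tin X C + tin X D := by
  unfold tin
  rw [Matrix.mul_add, Matrix.trace_add]

lemma nucNorm_add_le [DecidableEq ι] (C D : Matrix ι κ ℝ) :
    nucNorm (C + D) ≤ nucNorm C + nucNorm D := by
  obtain ⟨X, hX1, hX2⟩ := attain (C + D)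
  rw [← hX2, tin_add]
  have h1 := tin_le X C
  have h2 := tin_le X D
  nlinarith [nucNorm_nonneg C, nucNorm_nonneg D, specNorm_nonneg X]

lemma nucNorm_mul_le [DecidableEq ι] (M : Matrix ι ι' ℝ) (B : Matrix ι' κ ℝ) :
    nucNorm (M * B) ≤ specNorm M * nucNorm B := by
  obtain ⟨X, hX1, hX2⟩ := attain (M * B)
  rw [← hX2]
  have h3 := tin_bound X M B
  nlinarith [specNorm_nonneg M, nucNorm_nonneg B, specNorm_nonneg X,
    mul_nonneg (specNorm_nonneg M) (nucNorm_nonneg B)]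

open Kronecker

lemma specNorm_kron_one_le {N m : ℕ} (K : Matrix (Fin N) (Fin N) ℝ) :
    specNorm (K ⊗ₖ (1 : Matrix (Fin m) (Fin m) ℝ)) ≤ specNorm K := by
  refine specNorm_le_of _ (specNorm_nonneg K) fun u => ?_
  have key : ∀ i a, ((K ⊗ₖ (1 : Matrix (Fin m) (Fin m) ℝ)) *ᵥ u) (i, a)
      = (K *ᵥ fun j => u (j, a)) i := by
    intro i a
    show ∑ p : Fin N × Fin m, (K ⊗ₖ (1 : Matrix (Fin m) (Fin m) ℝ)) (i, a) p * u p = _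
    rw [Fintype.sum_prod_type]
    simp [Matrix.kroneckerMap_apply, Matrix.one_apply, Matrix.mulVec, dotProduct,
      mul_ite, mul_zero, ite_mul, zero_mul, mul_one, Finset.sum_ite_eq]
  unfold enorm
  have hsq : ∑ p : Fin N × Fin m, (((K ⊗ₖ (1 : Matrix (Fin m) (Fin m) ℝ)) *ᵥ u) p)^2
      ≤ specNorm K ^ 2 * ∑ p : Fin N × Fin m, (u p)^2 := by
    calc ∑ p : Fin N × Fin m, (((K ⊗ₖ (1 : Matrix (Fin m) (Fin m) ℝ)) *ᵥ u) p)^2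
        = ∑ a : Fin m, ∑ i : Fin N, ((K *ᵥ fun j => u (j, a)) i)^2 := by
          rw [Fintype.sum_prod_type, Finset.sum_comm]
          exact Finset.sum_congr rfl fun a _ => Finset.sum_congr rfl fun i _ => by rw [key]
      _ ≤ ∑ a : Fin m, specNorm K ^ 2 * ∑ j : Fin N, (u (j, a))^2 := by
          refine Finset.sum_le_sum fun a _ => ?_
          have h := enorm_mulVec_le K (fun j => u (j, a))
          have h2 := pow_le_pow_left₀ (enorm_nonneg _) h 2
          rw [mul_pow, enorm_sq, enorm_sq] at h2
          exact h2
      _ = specNorm K ^ 2 * ∑ p : Fin N × Fin m, (u p)^2 := by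
          rw [← Finset.mul_sum, Fintype.sum_prod_type, Finset.sum_comm]
  calc Real.sqrt (∑ p : Fin N × Fin m, (((K ⊗ₖ (1 : Matrix (Fin m) (Fin m) ℝ)) *ᵥ u) p)^2)
      ≤ Real.sqrt (specNorm K ^ 2 * ∑ p : Fin N × Fin m, (u p)^2) := Real.sqrt_le_sqrt hsq
    _ = specNorm K * Real.sqrt (∑ p : Fin N × Fin m, (u p)^2) := by
        rw [Real.sqrt_mul (sq_nonneg _), Real.sqrt_sq (specNorm_nonneg K)]

lemma vstack_avg {N m n : ℕ} (Z : Matrix (Fin N × Fin m) (Fin n) ℝ) :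
    vstack (fun _ => (N : ℝ)⁻¹ • ∑ i, blk Z i)
      = ((((N : ℝ)⁻¹ • Matrix.of (fun _ _ => (1 : ℝ))) : Matrix (Fin N) (Fin N) ℝ)
          ⊗ₖ (1 : Matrix (Fin m) (Fin m) ℝ)) * Z := by
  ext p j
  obtain ⟨i, a⟩ := p
  show ((N : ℝ)⁻¹ • ∑ k, blk Z k) a j = _
  rw [Matrix.mul_apply, Fintype.sum_prod_type]
  simp [blk, Matrix.kroneckerMap_apply, Matrix.one_apply, Matrix.smul_apply, Matrix.sum_apply,
    mul_ite, ite_mul, mul_zero, zero_mul, mul_one, Finset.sum_ite_eq, Finset.mul_sum]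

lemma main_id {N m n : ℕ} (hN : 0 < N) (W : Matrix (Fin N) (Fin N) ℝ)
    (hrow : ∀ i, ∑ j, W i j = 1) (hcol : ∀ j, ∑ i, W i j = 1)
    (V Δ : Matrix (Fin N × Fin m) (Fin n) ℝ) :
    (W ⊗ₖ (1 : Matrix (Fin m) (Fin m) ℝ)) * (V + Δ)
        - vstack (fun _ =>
            (N : ℝ)⁻¹ • ∑ i, blk ((W ⊗ₖ (1 : Matrix (Fin m) (Fin m) ℝ)) * (V + Δ)) i)
      = ((W - (N : ℝ)⁻¹ • Matrix.of (fun _ _ => (1 : ℝ))) ⊗ₖ (1 : Matrix (Fin m) (Fin m) ℝ))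
          * (V - vstack (fun _ => (N : ℝ)⁻¹ • ∑ i, blk V i))
        + ((W - (N : ℝ)⁻¹ • Matrix.of (fun _ _ => (1 : ℝ)))
            ⊗ₖ (1 : Matrix (Fin m) (Fin m) ℝ)) * Δ := by
  have hNne : (N : ℝ) ≠ 0 := Nat.cast_ne_zero.mpr hN.ne'
  rw [vstack_avg, vstack_avg]
  set P : Matrix (Fin N) (Fin N) ℝ := (N : ℝ)⁻¹ • Matrix.of (fun _ _ => (1 : ℝ)) with hPdef
  have hPW : P * W = P := by
    ext i j
    simp only [Matrix.mul_apply, hPdef, Matrix.smul_apply, Matrix.of_apply, smul_eq_mul, mul_one]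
    rw [← Finset.mul_sum, hcol j]
    ring
  have hWP : W * P = P := by
    ext i j
    simp only [Matrix.mul_apply, hPdef, Matrix.smul_apply, Matrix.of_apply, smul_eq_mul, mul_one]
    rw [← Finset.sum_mul, hrow i]
    ring
  have hPP : P * P = P := by
    ext i j
    simp only [Matrix.mul_apply, hPdef, Matrix.smul_apply, Matrix.of_apply, smul_eq_mul, mul_one]
    rw [Finset.sum_const, Finset.card_univ, Fintype.card_fin, nsmul_eq_mul]
    field_simp
  have hKmul : ∀ (A B : Matrix (Fin N) (Fin N) ℝ),
      (A ⊗ₖ (1 : Matrix (Fin m) (Fin m) ℝ)) * (B ⊗ₖ (1 : Matrix (Fin m) (Fin m) ℝ))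
        = (A * B) ⊗ₖ (1 : Matrix (Fin m) (Fin m) ℝ) := fun A B => by
    rw [← Matrix.mul_kronecker_mul, Matrix.one_mul]
  have h0 : (W - P) * P = 0 := by rw [Matrix.sub_mul, hWP, hPP, sub_self]
  have hsubk : (W - P) ⊗ₖ (1 : Matrix (Fin m) (Fin m) ℝ)
      = W ⊗ₖ (1 : Matrix (Fin m) (Fin m) ℝ) - P ⊗ₖ (1 : Matrix (Fin m) (Fin m) ℝ) := by
    ext p q
    obtain ⟨i, a⟩ := p
    obtain ⟨j, b⟩ := q
    simp [Matrix.kroneckerMap_apply, Matrix.sub_apply, sub_mul]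
  calc (W ⊗ₖ (1 : Matrix (Fin m) (Fin m) ℝ)) * (V + Δ)
        - (P ⊗ₖ (1 : Matrix (Fin m) (Fin m) ℝ))
            * ((W ⊗ₖ (1 : Matrix (Fin m) (Fin m) ℝ)) * (V + Δ))
      = ((W - P) ⊗ₖ (1 : Matrix (Fin m) (Fin m) ℝ)) * (V + Δ) := by
        rw [← Matrix.mul_assoc, hKmul, hPW, hsubk, Matrix.sub_mul]
    _ = ((W - P) ⊗ₖ (1 : Matrix (Fin m) (Fin m) ℝ))
            * (V - (P ⊗ₖ (1 : Matrix (Fin m) (Fin m) ℝ)) * V)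
        + ((W - P) ⊗ₖ (1 : Matrix (Fin m) (Fin m) ℝ)) * Δ := by
        rw [Matrix.mul_sub, ← Matrix.mul_assoc, hKmul, h0, Matrix.zero_kronecker,
          Matrix.zero_mul, sub_zero, ← Matrix.mul_add]

end S15

theorem stmt15 {N m n : ℕ} (hN : 0 < N) (W : Matrix (Fin N) (Fin N) ℝ)
    (hrow : ∀ i, ∑ j, W i j = 1) (hcol : ∀ j, ∑ i, W i j = 1)
    (lam : ℝ)
    (hlam : lam = specNorm (W - (N : ℝ)⁻¹ • Matrix.of (fun _ _ => (1 : ℝ))))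
    (V Δ : Matrix (Fin N × Fin m) (Fin n) ℝ) :
    nucNorm ((W ⊗ₖ (1 : Matrix (Fin m) (Fin m) ℝ)) * (V + Δ)
        - vstack (fun _ =>
            (N : ℝ)⁻¹ • ∑ i, blk ((W ⊗ₖ (1 : Matrix (Fin m) (Fin m) ℝ)) * (V + Δ)) i))
      ≤ lam * (nucNorm (V - vstack (fun _ => (N : ℝ)⁻¹ • ∑ i, blk V i)) + nucNorm Δ) := by
  rw [hlam, S15.main_id hN W hrow hcol V Δ]
  set C := V - vstack (fun _ => (N : ℝ)⁻¹ • ∑ i, blk V i) with hC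
  set K := (W - (N : ℝ)⁻¹ • Matrix.of (fun _ _ => (1 : ℝ))) ⊗ₖ (1 : Matrix (Fin m) (Fin m) ℝ)
    with hK
  refine le_trans (S15.nucNorm_add_le _ _) ?_
  have b1 := S15.nucNorm_mul_le K C
  have b2 := S15.nucNorm_mul_le K Δ
  have hk : specNorm K ≤ specNorm (W - (N : ℝ)⁻¹ • Matrix.of (fun _ _ => (1 : ℝ))) := by
    rw [hK]
    exact S15.specNorm_kron_one_le _
  nlinarith [S15.nucNorm_nonneg C, S15.nucNorm_nonneg Δ, S15.specNorm_nonneg K,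
    mul_nonneg (add_nonneg (S15.nucNorm_nonneg C) (S15.nucNorm_nonneg Δ)) (sub_nonneg.mpr hk)]
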